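/- Let K ≥ 2 be an integer and a_1, …, a_K > 0 real numbers. Then the integral over the open simplex {p ∈ ℝ^{K−1} : p_k > 0 for all k and Σ_{k=1}^{K−1} p_k < 1} of the function p ↦ ∏_{k=1}^{K−1} p_k^{a_k−1} · (1 − Σ_{k=1}^{K−1} p_k)^{a_K−1}, with respect to Lebesgue measure on ℝ^{K−1}, equals B(a) = ∏_{k=1}^K Γ(a_k) / Γ(Σ_{k=1}^K a_k). In particular, the Dirichlet density with parameter a integrates to 1 over the simplex. -/

import Mathlib

open MeasureTheory Real

open Set
open scoped ENNReal

lemma measurable_rpow_const' (c : ℝ) : Measurable fun x : ℝ => x ^ c :=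
  measurable_of_continuousOn_compl_singleton 0 fun x hx =>
    (Real.continuousAt_rpow_const x c (Or.inl hx)).continuousWithinAt

lemma beta_intervalIntegrable {u v : ℝ} (hu : 0 < u) (hv : 0 < v) :
    IntervalIntegrable (fun x : ℝ => x ^ (u - 1) * (1 - x) ^ (v - 1)) volume 0 1 := by
  have hc := Complex.betaIntegral_convergent (u := (u : ℂ)) (v := (v : ℂ))
    (by simpa using hu) (by simpa using hv)
  rw [intervalIntegrable_iff_integrableOn_Ioc_of_le zero_le_one] at hc ⊢
  have : IntegrableOn (fun x : ℝ => ((x ^ (u - 1) * (1 - x) ^ (v - 1) : ℝ) : ℂ)) (Ioc 0 1) := by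
    refine hc.congr_fun (fun x hx => ?_) measurableSet_Ioc
    rw [Complex.ofReal_mul, Complex.ofReal_cpow hx.1.le, Complex.ofReal_cpow (by linarith [hx.2]),
      Complex.ofReal_sub, Complex.ofReal_sub, Complex.ofReal_one]
    norm_num
  simpa [IntegrableOn] using this.re

lemma beta_integral_eq {u v : ℝ} (hu : 0 < u) (hv : 0 < v) :
    ∫ x in (0:ℝ)..1, x ^ (u - 1) * (1 - x) ^ (v - 1) =
      Real.Gamma u * Real.Gamma v / Real.Gamma (u + v) := by
  have key := Complex.Gamma_mul_Gamma_eq_betaIntegral (s := (u : ℂ)) (t := (v : ℂ))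
    (by simpa using hu) (by simpa using hv)
  have hbeta : Complex.betaIntegral u v =
      ((∫ x in (0:ℝ)..1, x ^ (u - 1) * (1 - x) ^ (v - 1) : ℝ) : ℂ) := by
    rw [Complex.betaIntegral, ← intervalIntegral.integral_ofReal]
    refine intervalIntegral.integral_congr (fun x hx => ?_)
    rw [uIcc_of_le zero_le_one] at hx
    rw [Complex.ofReal_mul, Complex.ofReal_cpow hx.1, Complex.ofReal_cpow (by linarith [hx.2]),
      Complex.ofReal_sub, Complex.ofReal_sub, Complex.ofReal_one]
    norm_num
  rw [hbeta, ← Complex.ofReal_add, Complex.Gamma_ofReal, Complex.Gamma_ofReal,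
    Complex.Gamma_ofReal, ← Complex.ofReal_mul, ← Complex.ofReal_mul] at key
  have := Complex.ofReal_injective key
  have hne : Real.Gamma (u + v) ≠ 0 := (Real.Gamma_pos_of_pos (by linarith)).ne'
  field_simp
  linarith [this]


lemma beta_scaled_key {u v s : ℝ} (hu : 0 < u) (hv : 0 < v) (hs : 0 < s) (t : ℝ)
    (ht0 : 0 ≤ t) (hts : t ≤ s) :
    t ^ (u - 1) * (s - t) ^ (v - 1) =
      s ^ (u - 1) * s ^ (v - 1) * ((s⁻¹ * t) ^ (u - 1) * (1 - s⁻¹ * t) ^ (v - 1)) := by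
  have h1 : (s⁻¹ * t) ^ (u - 1) = t ^ (u - 1) / s ^ (u - 1) := by
    rw [inv_mul_eq_div, Real.div_rpow ht0 hs.le]
  have h2 : (1 - s⁻¹ * t) ^ (v - 1) = (s - t) ^ (v - 1) / s ^ (v - 1) := by
    have : 1 - s⁻¹ * t = (s - t) / s := by field_simp
    rw [this, Real.div_rpow (by linarith) hs.le]
  rw [h1, h2]
  have hsu : (0:ℝ) < s ^ (u - 1) := Real.rpow_pos_of_pos hs _
  have hsv : (0:ℝ) < s ^ (v - 1) := Real.rpow_pos_of_pos hs _
  field_simp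

lemma beta_scaled_intervalIntegrable {u v s : ℝ} (hu : 0 < u) (hv : 0 < v) (hs : 0 < s) :
    IntervalIntegrable (fun t : ℝ => t ^ (u - 1) * (s - t) ^ (v - 1)) volume 0 s := by
  have h1 := ((beta_intervalIntegrable hu hv).comp_mul_left (c := s⁻¹)).const_mul
    (s ^ (u - 1) * s ^ (v - 1))
  rw [zero_div, one_div, inv_inv] at h1
  refine h1.congr ?_
  intro t ht
  beta_reduce
  rw [uIoc_of_le hs.le] at ht
  rw [beta_scaled_key hu hv hs t ht.1.le ht.2, mul_assoc]

lemma beta_scaled_integral {u v s : ℝ} (hu : 0 < u) (hv : 0 < v) (hs : 0 < s) :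
    ∫ t in (0:ℝ)..s, t ^ (u - 1) * (s - t) ^ (v - 1) =
      s ^ (u + v - 1) * (Real.Gamma u * Real.Gamma v / Real.Gamma (u + v)) := by
  have hcongr : ∫ t in (0:ℝ)..s, t ^ (u - 1) * (s - t) ^ (v - 1) =
      ∫ t in (0:ℝ)..s, s ^ (u - 1) * s ^ (v - 1) *
        ((s⁻¹ * t) ^ (u - 1) * (1 - s⁻¹ * t) ^ (v - 1)) := by
    refine intervalIntegral.integral_congr (fun t ht => ?_)
    rw [uIcc_of_le hs.le] at ht
    exact beta_scaled_key hu hv hs t ht.1 ht.2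
  rw [hcongr, intervalIntegral.integral_const_mul,
    intervalIntegral.integral_comp_mul_left
      (fun x => x ^ (u - 1) * (1 - x) ^ (v - 1)) (inv_ne_zero hs.ne'),
    mul_zero, inv_mul_cancel₀ hs.ne', inv_inv, beta_integral_eq hu hv]
  rw [smul_eq_mul]
  have : s ^ (u - 1) * s ^ (v - 1) * s = s ^ (u + v - 1) := by
    nth_rewrite 3 [← Real.rpow_one s]
    rw [← Real.rpow_add hs, ← Real.rpow_add hs]
    ring_nf
  rw [← this]
  ring

lemma beta_scaled_lintegral {u v s : ℝ} (hu : 0 < u) (hv : 0 < v) (hs : 0 < s) :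
    ∫⁻ t in Ioo 0 s, ENNReal.ofReal (t ^ (u - 1) * (s - t) ^ (v - 1)) =
      ENNReal.ofReal (s ^ (u + v - 1) * (Real.Gamma u * Real.Gamma v / Real.Gamma (u + v))) := by
  have hInt : IntegrableOn (fun t : ℝ => t ^ (u - 1) * (s - t) ^ (v - 1)) (Ioo 0 s) := by
    have := (intervalIntegrable_iff_integrableOn_Ioc_of_le hs.le).mp
      (beta_scaled_intervalIntegrable hu hv hs)
    exact this.mono_set Ioo_subset_Ioc_self
  rw [← ofReal_integral_eq_lintegral_ofReal hInt ?_]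
  · rw [← integral_Ioc_eq_integral_Ioo, ← intervalIntegral.integral_of_le hs.le,
      beta_scaled_integral hu hv hs]
  · filter_upwards [ae_restrict_mem measurableSet_Ioo] with t ht
    exact mul_nonneg (Real.rpow_nonneg ht.1.le _) (Real.rpow_nonneg (by linarith [ht.2]) _)

def dSimplex (n : ℕ) : Set (Fin n → ℝ) := {p | (∀ i, 0 < p i) ∧ ∑ i, p i < 1}

lemma measurableSet_dSimplex (n : ℕ) : MeasurableSet (dSimplex n) := by
  have : dSimplex n = (⋂ i, {p : Fin n → ℝ | 0 < p i}) ∩ {p : Fin n → ℝ | ∑ i, p i < 1} := by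
    ext p; simp [dSimplex]
  rw [this]
  exact (MeasurableSet.iInter fun i =>
      measurableSet_lt measurable_const (measurable_pi_apply i)).inter
    (measurableSet_lt (Finset.univ.measurable_sum fun i _ => measurable_pi_apply i)
      measurable_const)

lemma measurable_dKernel {n : ℕ} (b : Fin n → ℝ) (c : ℝ) :
    Measurable fun p : Fin n → ℝ =>
      (∏ i, p i ^ (b i - 1)) * (1 - ∑ i, p i) ^ (c - 1) :=
  (Finset.univ.measurable_prod fun i _ =>
      (measurable_rpow_const' (b i - 1)).comp (measurable_pi_apply i)).mul
    ((measurable_rpow_const' (c - 1)).comp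
      (measurable_const.sub (Finset.univ.measurable_sum fun i _ => measurable_pi_apply i)))

lemma snoc_sum {n : ℕ} (q : Fin n → ℝ) (t : ℝ) :
    ∑ i : Fin (n + 1), Fin.snoc q t i = (∑ i, q i) + t := by
  rw [Fin.sum_univ_castSucc]
  simp

lemma snoc_mem_iff {n : ℕ} (q : Fin n → ℝ) (t : ℝ) :
    Fin.snoc q t ∈ dSimplex (n + 1) ↔ q ∈ dSimplex n ∧ t ∈ Set.Ioo 0 (1 - ∑ i, q i) := by
  constructor
  · rintro ⟨hpos, hsum⟩
    rw [snoc_sum] at hsum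
    have ht : 0 < t := by simpa using hpos (Fin.last n)
    have hqi : ∀ i, 0 < q i := fun i => by simpa using hpos i.castSucc
    exact ⟨⟨hqi, by linarith⟩, ht, by linarith⟩
  · rintro ⟨⟨hqi, _⟩, ht0, hts⟩
    refine ⟨fun i => ?_, by rw [snoc_sum]; linarith⟩
    refine Fin.lastCases ?_ (fun j => ?_) i <;> simp [ht0, hqi]

lemma dirichlet_lintegral :
    ∀ (n : ℕ) (b : Fin n → ℝ) (c : ℝ), (∀ i, 0 < b i) → 0 < c →
    ∫⁻ p in dSimplex n,
        ENNReal.ofReal ((∏ i, p i ^ (b i - 1)) * (1 - ∑ i, p i) ^ (c - 1)) =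
      ENNReal.ofReal ((∏ i, Real.Gamma (b i)) * Real.Gamma c /
        Real.Gamma ((∑ i, b i) + c)) := by
  intro n
  induction n with
  | zero =>
    intro b c hb hc
    have hset : dSimplex 0 = Set.univ := by ext p; simp [dSimplex]
    rw [hset, Measure.restrict_univ]
    have hΓ : Real.Gamma c ≠ 0 := (Real.Gamma_pos_of_pos hc).ne'
    have huniv : (volume : Measure (Fin 0 → ℝ)) Set.univ = 1 := by
      rw [volume_pi, Measure.pi_univ]; simp
    simp [Real.one_rpow, lintegral_const, div_self hΓ, huniv]
  | succ n ih =>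
    intro b c hb hc
    set bl := b (Fin.last n) with hbl
    set b' : Fin n → ℝ := fun i => b i.castSucc with hb'def
    have hb' : ∀ i, 0 < b' i := fun i => hb _
    have hblpos : 0 < bl := hb _
    set f : (Fin (n + 1) → ℝ) → ℝ≥0∞ := fun p =>
      ENNReal.ofReal ((∏ i, p i ^ (b i - 1)) * (1 - ∑ i, p i) ^ (c - 1)) with hfdef
    have hfm : Measurable f := (measurable_dKernel b c).ennreal_ofReal
    have hindm : Measurable ((dSimplex (n + 1)).indicator f) :=
      hfm.indicator (measurableSet_dSimplex _)
    set e := MeasurableEquiv.piFinSuccAbove (fun _ : Fin (n + 1) => ℝ) (Fin.last n) with hedef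
    rw [← lintegral_indicator (measurableSet_dSimplex _) f]
    rw [MeasurePreserving.lintegral_map_equiv _ e.symm
      (volume_preserving_piFinSuccAbove (fun _ : Fin (n + 1) => ℝ) (Fin.last n)).symm]
    rw [MeasureTheory.Measure.volume_eq_prod]
    rw [lintegral_prod_symm (fun a => (dSimplex (n + 1)).indicator f (e.symm a))
      (Measurable.aemeasurable (hindm.comp e.symm.measurable))]
    have hq : ∀ q : Fin n → ℝ,
        (∫⁻ t : ℝ, (dSimplex (n + 1)).indicator f (e.symm (t, q))) =
        (dSimplex n).indicator (fun q =>
          ENNReal.ofReal ((∏ i, q i ^ (b' i - 1)) * (1 - ∑ i, q i) ^ ((bl + c) - 1)) *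
            ENNReal.ofReal (Real.Gamma bl * Real.Gamma c / Real.Gamma (bl + c))) q := by
      intro q
      have hesymm : ∀ t : ℝ, e.symm (t, q) = Fin.snoc q t := by
        intro t
        simp [hedef, MeasurableEquiv.piFinSuccAbove_symm_apply, Fin.insertNthEquiv,
          Fin.insertNth_last']
      by_cases hqS : q ∈ dSimplex n
      · set s := 1 - ∑ i, q i with hsdef
        have hs : 0 < s := by simpa [hsdef, sub_pos] using hqS.2
        have hCq : 0 ≤ ∏ i, q i ^ (b' i - 1) :=
          Finset.prod_nonneg fun i _ => Real.rpow_nonneg (hqS.1 i).le _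
        have hstep : ∀ t : ℝ, (dSimplex (n + 1)).indicator f (e.symm (t, q)) =
            (Set.Ioo 0 s).indicator (fun t =>
              ENNReal.ofReal (∏ i, q i ^ (b' i - 1)) *
                ENNReal.ofReal (t ^ (bl - 1) * (s - t) ^ (c - 1))) t := by
          intro t
          rw [hesymm]
          by_cases ht : t ∈ Set.Ioo 0 s
          · rw [Set.indicator_of_mem ht, Set.indicator_of_mem ((snoc_mem_iff q t).mpr ⟨hqS, ht⟩)]
            rw [hfdef]
            simp only
            rw [Fin.prod_univ_castSucc]
            simp only [Fin.snoc_castSucc, Fin.snoc_last, snoc_sum]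
            rw [← ENNReal.ofReal_mul hCq]
            congr 1
            have : 1 - ((∑ i, q i) + t) = s - t := by rw [hsdef]; ring
            rw [this]
            ring
          · rw [Set.indicator_of_notMem ht, Set.indicator_of_notMem]
            intro hmem'
            exact ht ((snoc_mem_iff q t).mp hmem').2
        simp_rw [hstep]
        rw [lintegral_indicator measurableSet_Ioo, lintegral_const_mul _ ?_, Set.indicator_of_mem hqS]
        · rw [beta_scaled_lintegral hblpos hc hs,
            ← ENNReal.ofReal_mul hCq,
            ← ENNReal.ofReal_mul (mul_nonneg hCq (Real.rpow_nonneg hs.le _))]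
          congr 1
          ring
        · exact ((measurable_rpow_const' (bl - 1)).mul
            ((measurable_rpow_const' (c - 1)).comp
              (measurable_const.sub measurable_id))).ennreal_ofReal
      · have hzero : ∀ t : ℝ, (dSimplex (n + 1)).indicator f (e.symm (t, q)) = 0 := by
          intro t
          rw [hesymm]
          exact Set.indicator_of_notMem (fun hmem' => hqS ((snoc_mem_iff q t).mp hmem').1) _
        simp [hzero, Set.indicator_of_notMem hqS]
    simp_rw [hq]
    rw [lintegral_indicator (measurableSet_dSimplex n), lintegral_mul_const _ ?_, ih b' (bl + c) hb'
      (by positivity)]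
    · have hsumpos : 0 < (∑ i, b' i) + (bl + c) := by
        have : 0 ≤ ∑ i, b' i := Finset.sum_nonneg fun i _ => (hb' i).le
        linarith
      have hΓbc : Real.Gamma (bl + c) ≠ 0 := (Real.Gamma_pos_of_pos (by positivity)).ne'
      have hΓS : Real.Gamma ((∑ i, b' i) + (bl + c)) ≠ 0 :=
        (Real.Gamma_pos_of_pos hsumpos).ne'
      have hnn : 0 ≤ (∏ i, Real.Gamma (b' i)) * Real.Gamma (bl + c) /
          Real.Gamma ((∑ i, b' i) + (bl + c)) := by
        apply div_nonneg _ (Real.Gamma_pos_of_pos hsumpos).le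
        exact mul_nonneg (Finset.prod_nonneg fun i _ => (Real.Gamma_pos_of_pos (hb' i)).le)
          (Real.Gamma_pos_of_pos (by positivity)).le
      rw [← ENNReal.ofReal_mul hnn]
      congr 1
      rw [Fin.prod_univ_castSucc, Fin.sum_univ_castSucc,
        show (∑ i, b' i) + bl + c = (∑ i, b' i) + (bl + c) from by ring]
      field_simp [hΓbc, hΓS]
      ring
    · exact (measurable_dKernel b' (bl + c)).ennreal_ofReal

/-- The Dirichlet density kernel integrates over the open simplex in `ℝ^(K-1)` to the
multivariate Beta function `B(a) = (∏ k, Γ(a k)) / Γ(∑ k, a k)`. -/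
theorem integral_dirichlet_kernel (K : ℕ) (hK : 2 ≤ K) (a : Fin K → ℝ) (ha : ∀ k, 0 < a k) :
    ∫ p in {p : Fin (K - 1) → ℝ | (∀ i, 0 < p i) ∧ ∑ i, p i < 1},
        (∏ i : Fin (K - 1), p i ^ (a (Fin.castLE (Nat.sub_le K 1) i) - 1)) *
          (1 - ∑ i, p i) ^ (a ⟨K - 1, by omega⟩ - 1) =
      (∏ k, Real.Gamma (a k)) / Real.Gamma (∑ k, a k) := by
  obtain ⟨n, rfl⟩ : ∃ n, K = n + 1 := ⟨K - 1, by omega⟩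
  show ∫ p in dSimplex n,
      (∏ i : Fin n, p i ^ (a i.castSucc - 1)) * (1 - ∑ i, p i) ^ (a (Fin.last n) - 1) =
    (∏ k, Real.Gamma (a k)) / Real.Gamma (∑ k, a k)
  have hb' : ∀ i : Fin n, 0 < a i.castSucc := fun i => ha _
  have hc : 0 < a (Fin.last n) := ha _
  have key := dirichlet_lintegral n (fun i => a i.castSucc) (a (Fin.last n)) hb' hc
  have hnn : 0 ≤ᵐ[volume.restrict (dSimplex n)] fun p : Fin n → ℝ =>
      (∏ i : Fin n, p i ^ (a i.castSucc - 1)) * (1 - ∑ i, p i) ^ (a (Fin.last n) - 1) := by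
    filter_upwards [ae_restrict_mem (measurableSet_dSimplex n)] with p hp
    exact mul_nonneg (Finset.prod_nonneg fun i _ => Real.rpow_nonneg (hp.1 i).le _)
      (Real.rpow_nonneg (by linarith [hp.2]) _)
  rw [MeasureTheory.integral_eq_lintegral_of_nonneg_ae hnn
    (measurable_dKernel (fun i : Fin n => a i.castSucc) (a (Fin.last n))).aestronglyMeasurable]
  rw [key, ENNReal.toReal_ofReal ?_]
  · rw [Fin.prod_univ_castSucc (f := fun k => Real.Gamma (a k)), Fin.sum_univ_castSucc (f := a)]
  · have h1 : 0 < ∑ i : Fin n, a i.castSucc + a (Fin.last n) := by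
      have : 0 ≤ ∑ i : Fin n, a i.castSucc := Finset.sum_nonneg fun i _ => (hb' i).le
      linarith
    apply div_nonneg _ (Real.Gamma_pos_of_pos h1).le
    exact mul_nonneg (Finset.prod_nonneg fun i _ => (Real.Gamma_pos_of_pos (hb' i)).le)
      (Real.Gamma_pos_of_pos hc).le
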